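/- Let K be a quadratic number field of discriminant D with δ = (D+√D)/2, let 𝔞 be a nonzero fractional ideal of K, and let f : 𝔞 × 𝔞 → Z be an antisymmetric Z-bilinear form. Let α, β be a Z-basis of 𝔞 satisfying (ᾱβ − αβ̄)/√D = N(𝔞) > 0 (bar denoting the nontrivial automorphism of K), and let q_𝔞 be the associated integral binary quadratic form, so N_{K/Q}(αx + βy) = N(𝔞)·q_𝔞(x,y) for x,y ∈ Z. Let A be a commutative ring and f_A : (𝔞 ⊗_Z A) × (𝔞 ⊗_Z A) → A the A-bilinear extension of f. Then for every m = α ⊗ x + β ⊗ y ∈ 𝔞 ⊗_Z A with x, y ∈ A, one has f_A(m, m·δ) = q_𝔞(x,y)·f(α,β) in A, where m·δ denotes the action of δ ∈ O_K on 𝔞 ⊗_Z A through the 𝔞 factor. -/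

import Mathlib

open NumberField
open scoped TensorProduct

set_option maxHeartbeats 2000000 in
/-- Let `K` be a quadratic number field of discriminant `D` with
`𝓞 K = ℤ[δ]`, `δ = (D+√D)/2` (so `√D = 2δ - D`), `𝔞` a nonzero fractional ideal with an
antisymmetric `ℤ`-bilinear form `f : 𝔞 × 𝔞 → ℤ`, and `α = bas 0`, `β = bas 1` a `ℤ`-basis of
`𝔞` with `(ᾱβ - αβ̄)/√D = N(𝔞) > 0` (the bar being the nontrivial automorphism `σ`), and
`q_𝔞` the associated binary quadratic form.  Then for any commutative ring `A`, the
`A`-bilinear extension `F` of `f` satisfies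
`F(m, m·δ) = q_𝔞(x,y)·f(α,β)` for `m = α ⊗ x + β ⊗ y ∈ 𝔞 ⊗[ℤ] A`. -/
theorem stmt_16 (K : Type) [Field K] [NumberField K] (hK : Module.finrank ℚ K = 2)
    (D : ℤ) (hD : NumberField.discr K = D)
    (δ : 𝓞 K) (hδ : ((2 : K) * (δ : K) - (D : K)) ^ 2 = (D : K))
    (basK : Module.Basis (Fin 2) ℤ (𝓞 K)) (hbK0 : basK 0 = 1) (hbK1 : basK 1 = δ)
    (σ : K ≃ₐ[ℚ] K) (hsqrt : (2 : K) * (δ : K) - (D : K) ≠ 0)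
    (hσ : σ ((2 : K) * (δ : K) - (D : K)) = -((2 : K) * (δ : K) - (D : K)))
    (𝔞 : FractionalIdeal (nonZeroDivisors (𝓞 K)) K) (h𝔞 : 𝔞 ≠ 0)
    (bas : Module.Basis (Fin 2) ℤ ((𝔞 : Submodule (𝓞 K) K).restrictScalars ℤ))
    (f : ((𝔞 : Submodule (𝓞 K) K).restrictScalars ℤ) →ₗ[ℤ]
      ((𝔞 : Submodule (𝓞 K) K).restrictScalars ℤ) →ₗ[ℤ] ℤ)
    (hf : ∀ v w, f v w = - f w v)
    (hor : σ (bas 0 : K) * (bas 1 : K) - (bas 0 : K) * σ (bas 1 : K) =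
      (FractionalIdeal.absNorm 𝔞 : K) * ((2 : K) * (δ : K) - (D : K)))
    (hpos : 0 < FractionalIdeal.absNorm 𝔞)
    (a b c : ℤ)
    (hq : ∀ x y : ℤ,
      Algebra.norm ℚ (((bas 0 : K)) * (x : K) + ((bas 1 : K)) * (y : K)) =
        FractionalIdeal.absNorm 𝔞 * ((a * x ^ 2 + b * x * y + c * y ^ 2 : ℤ) : ℚ))
    (A : Type) [CommRing A]
    (F : (((𝔞 : Submodule (𝓞 K) K).restrictScalars ℤ) ⊗[ℤ] A) →
      (((𝔞 : Submodule (𝓞 K) K).restrictScalars ℤ) ⊗[ℤ] A) → A)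
    (hFl : ∀ m m' n, F (m + m') n = F m n + F m' n)
    (hFr : ∀ m n n', F m (n + n') = F m n + F m n')
    (hFt : ∀ (v w : ((𝔞 : Submodule (𝓞 K) K).restrictScalars ℤ)) (x y : A),
      F (v ⊗ₜ x) (w ⊗ₜ y) = ((f v w : ℤ) : A) * (x * y))
    (x y : A) :
    F ((bas 0) ⊗ₜ x + (bas 1) ⊗ₜ y) ((δ • bas 0) ⊗ₜ x + (δ • bas 1) ⊗ₜ y) =
      ((a : A) * x ^ 2 + (b : A) * x * y + (c : A) * y ^ 2) *
        ((f (bas 0) (bas 1) : ℤ) : A) := by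

  classical
  -- σ is nontrivial
  have hσne : σ ≠ AlgEquiv.refl := by
    intro h
    apply hsqrt
    rw [h] at hσ
    simp only [AlgEquiv.coe_refl, id_eq] at hσ
    have h2 : (2 : K) * ((2 : K) * (δ : K) - (D : K)) = 0 := by linear_combination hσ
    rcases mul_eq_zero.mp h2 with h' | h'
    · exact absurd h' two_ne_zero
    · exact h'
  -- K/ℚ is Galois with group {1, σ}, hence norm z = z * σ z
  have hcard_le : Fintype.card (K ≃ₐ[ℚ] K) ≤ 2 := by
    calc Fintype.card (K ≃ₐ[ℚ] K) = Fintype.card (K →ₐ[ℚ] K) :=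
          Fintype.card_congr (algEquivEquivAlgHom ℚ K).toEquiv
      _ ≤ Module.finrank K (K →ₗ[ℚ] K) := finrank_algHom ℚ K
      _ = Module.finrank ℚ K := Module.finrank_linearMap_self ℚ K K
      _ = 2 := hK
  have hcard_ge : 2 ≤ Fintype.card (K ≃ₐ[ℚ] K) :=
    Fintype.one_lt_card_iff_nontrivial.mpr ⟨⟨σ, AlgEquiv.refl, hσne⟩⟩
  have hcard : Fintype.card (K ≃ₐ[ℚ] K) = 2 := le_antisymm hcard_le hcard_ge
  have : IsGalois ℚ K := IsGalois.of_card_aut_eq_finrank (F := ℚ) (E := K) (Nat.card_eq_fintype_card.trans (hcard.trans hK.symm))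
  have huniv : (Finset.univ : Finset (K ≃ₐ[ℚ] K)) = {(AlgEquiv.refl : K ≃ₐ[ℚ] K), σ} := by
    symm
    apply Finset.eq_univ_of_card
    rw [Finset.card_pair (Ne.symm hσne), hcard]
  have hnorm : ∀ z : K, algebraMap ℚ K (Algebra.norm ℚ z) = z * σ z := by
    intro z
    rw [Algebra.norm_eq_prod_automorphisms, huniv, Finset.prod_pair (Ne.symm hσne)]
    simp
  -- names
  set α : K := (bas 0 : K) with hα
  set β : K := (bas 1 : K) with hβ
  set n : ℚ := FractionalIdeal.absNorm 𝔞 with hn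
  -- norm identities in K
  have hqK : ∀ u v : ℤ, (α * u + β * v) * σ (α * u + β * v)
      = (n : K) * ((a * u ^ 2 + b * u * v + c * v ^ 2 : ℤ) : K) := by
    intro u v
    have h := congrArg (algebraMap ℚ K) (hq u v)
    rw [hnorm] at h
    rw [map_mul, eq_ratCast (algebraMap ℚ K) n, map_intCast] at h
    exact h
  have h10 := hqK 1 0
  have h01 := hqK 0 1
  have h11 := hqK 1 1
  push_cast at h10 h01 h11
  simp only [mul_one, mul_zero, add_zero, zero_add, one_pow, map_add] at h10 h01 h11
  have hA : α * σ α = (n : K) * (a : K) := by linear_combination h10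
  have hC : β * σ β = (n : K) * (c : K) := by linear_combination h01
  have hB : α * σ β + β * σ α = (n : K) * (b : K) := by linear_combination h11 - hA - hC
  -- σ δ = D - δ
  have hσδ : σ (δ : K) = (D : K) - (δ : K) := by
    rw [map_sub, map_mul] at hσ
    have h2' : σ ((2 : K)) = 2 := by rw [map_ofNat]
    rw [h2', map_intCast] at hσ
    have h2 : (2 : K) * σ (δ : K) = (2 : K) * ((D : K) - (δ : K)) := by linear_combination hσ
    exact mul_left_cancel₀ two_ne_zero h2
  -- coordinates of δ•α and δ•β
  set p : ℤ := bas.repr (δ • bas 0) 0 with hp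
  set q : ℤ := bas.repr (δ • bas 0) 1 with hqq
  set r : ℤ := bas.repr (δ • bas 1) 0 with hr
  set t : ℤ := bas.repr (δ • bas 1) 1 with ht
  have e0 : δ • bas 0 = p • bas 0 + q • bas 1 := by
    conv_lhs => rw [← bas.sum_repr (δ • bas 0)]
    rw [Fin.sum_univ_two]
  have e1 : δ • bas 1 = r • bas 0 + t • bas 1 := by
    conv_lhs => rw [← bas.sum_repr (δ • bas 1)]
    rw [Fin.sum_univ_two]
  -- the same identities in K
  have hcoeδ : ∀ w : ((𝔞 : Submodule (𝓞 K) K).restrictScalars ℤ),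
      ((δ • w : ((𝔞 : Submodule (𝓞 K) K).restrictScalars ℤ)) : K) = (δ : K) * (w : K) :=
    fun _ => rfl
  have e0K : (δ : K) * α = (p : K) * α + (q : K) * β := by
    have h := congrArg (Subtype.val) e0
    rw [hcoeδ] at h
    push_cast [zsmul_eq_mul] at h
    exact h
  have e1K : (δ : K) * β = (r : K) * α + (t : K) * β := by
    have h := congrArg (Subtype.val) e1
    rw [hcoeδ] at h
    push_cast [zsmul_eq_mul] at h
    exact h
  have e0σ : ((D : K) - (δ : K)) * σ α = (p : K) * σ α + (q : K) * σ β := by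
    have h := congrArg σ e0K
    simp only [map_mul, map_add, map_intCast, hσδ] at h
    exact h
  have e1σ : ((D : K) - (δ : K)) * σ β = (r : K) * σ α + (t : K) * σ β := by
    have h := congrArg σ e1K
    simp only [map_mul, map_add, map_intCast, hσδ] at h
    exact h
  -- nonvanishing
  have hn0 : (n : K) ≠ 0 := by
    rw [Rat.cast_ne_zero]
    exact ne_of_gt hpos
  have hns : (n : K) * ((2 : K) * (δ : K) - (D : K)) ≠ 0 := mul_ne_zero hn0 hsqrt
  -- the three coefficient identities
  have hQ : q = a := by
    have h : ((n : K) * ((2 : K) * (δ : K) - (D : K))) * (q : K)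
        = ((n : K) * ((2 : K) * (δ : K) - (D : K))) * (a : K) := by
      linear_combination (-(σ α)) * e0K + α * e0σ + ((2 : K) * (δ : K) - (D : K)) * hA
        + (-(q : K)) * hor
    exact_mod_cast Int.cast_injective (mul_left_cancel₀ hns h)
  have hR : r = -c := by
    have h : ((n : K) * ((2 : K) * (δ : K) - (D : K))) * (r : K)
        = ((n : K) * ((2 : K) * (δ : K) - (D : K))) * ((-c : ℤ) : K) := by
      push_cast
      linear_combination (σ β) * e1K + (-β) * e1σ + (-((2 : K) * (δ : K) - (D : K))) * hC
        + (-(r : K)) * hor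
    exact_mod_cast Int.cast_injective (mul_left_cancel₀ hns h)
  have hT : t - p = b := by
    have h : ((n : K) * ((2 : K) * (δ : K) - (D : K))) * ((t - p : ℤ) : K)
        = ((n : K) * ((2 : K) * (δ : K) - (D : K))) * (b : K) := by
      push_cast
      linear_combination (-(σ α)) * e1K + α * e1σ + (-(σ β)) * e0K + β * e0σ
        + ((2 : K) * (δ : K) - (D : K)) * hB + ((p : K) - (t : K)) * hor
    exact_mod_cast Int.cast_injective (mul_left_cancel₀ hns h)
  -- f values
  have hfz : ∀ v, f v v = 0 := fun v => by have := hf v v; omega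
  have hf00 : f (bas 0) (δ • bas 0) = q * f (bas 0) (bas 1) := by
    rw [e0, map_add, map_smul, map_smul, smul_eq_mul, smul_eq_mul, hfz, mul_zero, zero_add]
  have hf01 : f (bas 0) (δ • bas 1) = t * f (bas 0) (bas 1) := by
    rw [e1, map_add, map_smul, map_smul, smul_eq_mul, smul_eq_mul, hfz, mul_zero, zero_add]
  have hf10 : f (bas 1) (δ • bas 0) = -p * f (bas 0) (bas 1) := by
    rw [e0, map_add, map_smul, map_smul, smul_eq_mul, smul_eq_mul, hfz, mul_zero, add_zero,
      hf (bas 1) (bas 0)]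
    ring
  have hf11 : f (bas 1) (δ • bas 1) = -r * f (bas 0) (bas 1) := by
    rw [e1, map_add, map_smul, map_smul, smul_eq_mul, smul_eq_mul, hfz, mul_zero, add_zero,
      hf (bas 1) (bas 0)]
    ring
  -- final computation
  have hTA : (t : A) - (p : A) = (b : A) := by exact_mod_cast congrArg (Int.cast : ℤ → A) hT
  rw [hFl, hFr, hFr, hFt, hFt, hFt, hFt, hf00, hf01, hf10, hf11, hQ, hR]
  push_cast
  linear_combination (x * y * ((f (bas 0) (bas 1) : ℤ) : A)) * hTA
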